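/- Let D be a linearly connected digraph with η ≥ 2 strong components, all nontrivial, and suppose the sequence {C(D^m)}_{m≥1} converges to a graph G. Then every connected component of G is a complete graph (i.e., any two distinct vertices lying in the same connected component of G are adjacent in G) if and only if for every p = 1, ..., η−1: κ_η divides κ_p, and for all (i, j), (i', j') ∈ I(D_{p,p+1}) one has red(i) − red(j) = red(i') − red(j') in ZMod κ_η, where red denotes the natural reduction homomorphisms ZMod κ_p → ZMod κ_η and ZMod κ_{p+1} → ZMod κ_η (well defined given the divisibility conditions). -/

import Mathlib

/-- A digraph: a finite vertex type with an irreflexive arc relation (no loops). -/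
structure Digraph' (V : Type*) where
  Adj : V → V → Prop
  irrefl : ∀ v, ¬ Adj v v

namespace Digraph'

variable {V : Type*}

/-- There is a directed walk of length `m` from `x` to `y` in `D`;
i.e. `y` is an `m`-step prey of `x`. -/
def HasWalk (D : Digraph' V) (m : ℕ) (x y : V) : Prop :=
  ∃ f : ℕ → V, f 0 = x ∧ f m = y ∧ ∀ t, t < m → D.Adj (f t) (f (t + 1))

/-- There is a directed walk of length `m` from `x` to `y` staying inside `S`. -/
def HasWalkIn (D : Digraph' V) (S : Set V) (m : ℕ) (x y : V) : Prop :=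
  ∃ f : ℕ → V, f 0 = x ∧ f m = y ∧ (∀ t, t ≤ m → f t ∈ S) ∧
    ∀ t, t < m → D.Adj (f t) (f (t + 1))

/-- The `m`-step competition graph `C(D^m)` of `D`. -/
def compGraph (D : Digraph' V) (m : ℕ) : SimpleGraph V where
  Adj u v := u ≠ v ∧ ∃ z, D.HasWalk m u z ∧ D.HasWalk m v z
  symm := by
    constructor
    rintro u v ⟨hne, z, h1, h2⟩
    exact ⟨hne.symm, z, h2, h1⟩
  loopless := ⟨fun v h => h.1 rfl⟩

/-- The sequence `{C(D^m)}_{m ≥ 1}` converges. -/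
def CompConverges (D : Digraph' V) : Prop :=
  ∃ N : ℕ, 1 ≤ N ∧ ∀ m, N ≤ m → D.compGraph m = D.compGraph N

/-- The sequence `{C(D^m)}_{m ≥ 1}` converges to the graph `G`. -/
def CompConvergesTo (D : Digraph' V) (G : SimpleGraph V) : Prop :=
  ∃ N : ℕ, 1 ≤ N ∧ ∀ m, N ≤ m → D.compGraph m = G

/-- `D` is linearly connected with strong components `Vset 1, …, Vset η`. -/
structure IsLinConn (D : Digraph' V) (η : ℕ) (Vset : ℕ → Set V) : Prop where
  nonempty : ∀ i, 1 ≤ i → i ≤ η → (Vset i).Nonempty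
  cover : ∀ v : V, ∃ i, 1 ≤ i ∧ i ≤ η ∧ v ∈ Vset i
  disjoint' : ∀ i j, 1 ≤ i → i ≤ η → 1 ≤ j → j ≤ η →
      ∀ v : V, v ∈ Vset i → v ∈ Vset j → i = j
  strong : ∀ i, 1 ≤ i → i ≤ η → ∀ x ∈ Vset i, ∀ y ∈ Vset i,
      ∃ m, D.HasWalkIn (Vset i) m x y
  arcs : ∀ x y : V, D.Adj x y → ∃ i, 1 ≤ i ∧
      ((i ≤ η ∧ x ∈ Vset i ∧ y ∈ Vset i) ∨
       (i + 1 ≤ η ∧ x ∈ Vset i ∧ y ∈ Vset (i + 1)))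
  linked : ∀ i, 1 ≤ i → i + 1 ≤ η → ∃ x ∈ Vset i, ∃ y ∈ Vset (i + 1), D.Adj x y

/-- A component with vertex set `S` is trivial if `S` is a singleton. -/
def IsTrivialComp (S : Set V) : Prop := ∃ v : V, S = {v}

/-- `κ` is the index of imprimitivity of the (strong) component with vertex set `S`:
the gcd of the lengths of all closed directed walks inside `S`. -/
def IsImprimIndex (D : Digraph' V) (S : Set V) (κ : ℕ) : Prop :=
  (∀ (x : V) (m : ℕ), x ∈ S → 0 < m → D.HasWalkIn S m x x → κ ∣ m) ∧
  ∀ d : ℕ, (∀ (x : V) (m : ℕ), x ∈ S → 0 < m → D.HasWalkIn S m x x → d ∣ m) → d ∣ κ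

/-- `u` is an imprimitivity labelling on `S`: along any arc inside `S` the label
increases by one.  Its fibers are the sets of imprimitivity. -/
def IsImprimLabelling (D : Digraph' V) (S : Set V) {κ : ℕ} (u : V → ZMod κ) : Prop :=
  ∀ x ∈ S, ∀ y ∈ S, D.Adj x y → u y = u x + 1

/-- `(k, l) ∈ I(D_{p,p+1})`: some arc goes from a vertex of `U_k^{(p)}` to a vertex of
`U_l^{(p+1)}`. -/
def InI (D : Digraph' V) (Vset : ℕ → Set V) {κ : ℕ → ℕ}
    (u : ∀ i : ℕ, V → ZMod (κ i)) (p : ℕ) (k : ZMod (κ p)) (l : ZMod (κ (p + 1))) : Prop :=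
  ∃ x ∈ Vset p, ∃ y ∈ Vset (p + 1), D.Adj x y ∧ u p x = k ∧ u (p + 1) y = l

/-- `(i, j)` is an edge of the bipartite graph `B_{p,p+1}`. -/
def BAdj (D : Digraph' V) (Vset : ℕ → Set V) {κ : ℕ → ℕ}
    (u : ∀ i : ℕ, V → ZMod (κ i)) (p : ℕ) (i : ZMod (κ p)) (j : ZMod (κ (p + 1))) : Prop :=
  ∃ (k : ZMod (κ p)) (l : ZMod (κ (p + 1))) (a : ℤ),
    InI D Vset u p k l ∧ i = k + 1 + (a : ZMod (κ p)) ∧ j = l + (a : ZMod (κ (p + 1)))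

/-- The competition skeleton graph (CS-graph) `PT_D^{(η)}`: vertices are pairs `⟨r, i⟩`
with `i ∈ ZMod (κ r)` (only `1 ≤ r ≤ η` carries edges); `⟨p, i⟩` and `⟨p+1, j⟩` are
adjacent exactly when `i` and `j` are adjacent in `B_{p,p+1}`. -/
def csGraph (D : Digraph' V) (Vset : ℕ → Set V) {κ : ℕ → ℕ}
    (u : ∀ i : ℕ, V → ZMod (κ i)) (η : ℕ) : SimpleGraph ((r : ℕ) × ZMod (κ r)) where
  Adj a b := ∃ p, 1 ≤ p ∧ p + 1 ≤ η ∧ ∃ (i : ZMod (κ p)) (j : ZMod (κ (p + 1))),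
    BAdj D Vset u p i j ∧
    ((a = ⟨p, i⟩ ∧ b = ⟨p + 1, j⟩) ∨ (a = ⟨p + 1, j⟩ ∧ b = ⟨p, i⟩))
  symm := by
    constructor
    rintro a b ⟨p, h1, h2, i, j, hB, hab⟩
    exact ⟨p, h1, h2, i, j, hB,
      hab.elim (fun h => Or.inr ⟨h.2, h.1⟩) (fun h => Or.inl ⟨h.2, h.1⟩)⟩
  loopless := by
    constructor
    rintro a ⟨p, _, _, i, j, _, hab⟩
    rcases hab with ⟨ha, hb⟩ | ⟨ha, hb⟩
    · have h : p = p + 1 := congrArg Sigma.fst (ha.symm.trans hb)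
      omega
    · have h : p + 1 = p := congrArg Sigma.fst (ha.symm.trans hb)
      omega

end Digraph'


section StmtAux

lemma mul_mem_semigroup {A : Set ℕ} (hadd : ∀ a ∈ A, ∀ b ∈ A, a + b ∈ A) :
    ∀ n a, a ∈ A → 0 < n → n * a ∈ A := by
  intro n
  induction n with
  | zero => intro a _ h; omega
  | succ k ih =>
    intro a ha _
    rcases Nat.eq_zero_or_pos k with hk | hk
    · subst hk; simpa using ha
    · have := hadd _ (ih a ha hk) _ ha
      rw [show k * a + a = (k+1) * a from by ring] at this
      exact this

lemma num_semigroup (A : Set ℕ) (hadd : ∀ a ∈ A, ∀ b ∈ A, a + b ∈ A)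
    (κ : ℕ) (h1 : ∀ a ∈ A, κ ∣ a) (h2 : ∀ d : ℕ, (∀ a ∈ A, d ∣ a) → d ∣ κ)
    (hpos : ∃ a ∈ A, 0 < a) :
    ∃ M, ∀ m, M ≤ m → κ ∣ m → m ∈ A := by
  obtain ⟨a0, ha0, ha0pos⟩ := hpos
  set A₀ : Set ℕ := {n | n = 0 ∨ n ∈ A} with hA₀
  have hadd₀ : ∀ a ∈ A₀, ∀ b ∈ A₀, a + b ∈ A₀ := by
    rintro a (rfl | ha) b (rfl | hb)
    · exact Or.inl rfl
    · exact Or.inr (by simpa using hb)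
    · exact Or.inr (by simpa using ha)
    · exact Or.inr (hadd a ha b hb)
  have hmul₀ : ∀ n a, a ∈ A₀ → n * a ∈ A₀ := by
    rintro n a (rfl | ha)
    · exact Or.inl (by simp)
    · rcases Nat.eq_zero_or_pos n with hn | hn
      · subst hn; exact Or.inl (by simp)
      · exact Or.inr (mul_mem_semigroup hadd n a ha hn)
  have h1₀ : ∀ a ∈ A₀, κ ∣ a := by
    rintro a (rfl | ha)
    · simp
    · exact h1 a ha
  set Dif : Set ℕ := {n | 0 < n ∧ ∃ s ∈ A₀, ∃ t ∈ A₀, s = t + n} with hDif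
  have hDne : a0 ∈ Dif := ⟨ha0pos, a0, Or.inr ha0, 0, Or.inl rfl, by omega⟩
  set d := sInf Dif with hd
  have hdmem : d ∈ Dif := Nat.sInf_mem ⟨a0, hDne⟩
  obtain ⟨hdpos, s₁, hs₁, t₁, ht₁, hst⟩ := hdmem
  have hdvd : ∀ a ∈ A₀, d ∣ a := by
    intro a ha
    by_contra hnd
    set r := a % d with hr
    set q := a / d with hq
    have hrd : r < d := Nat.mod_lt a hdpos
    have hrpos : 0 < r := by
      rcases Nat.eq_zero_or_pos r with h0 | h0
      · exact absurd (Nat.dvd_of_mod_eq_zero h0) hnd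
      · exact h0
    have haqr : d * q + r = a := Nat.div_add_mod a d
    have hrD : r ∈ Dif := by
      refine ⟨hrpos, a + q * t₁, hadd₀ _ ha _ (hmul₀ q t₁ ht₁), q * s₁, hmul₀ q s₁ hs₁, ?_⟩
      rw [hst, ← haqr]; ring
    have := Nat.sInf_le hrD
    omega
  have hdκ : d ∣ κ := h2 d (fun a ha => hdvd a (Or.inr ha))
  have hκd : κ ∣ d := by
    have ha1 := h1₀ s₁ hs₁
    have ha2 := h1₀ t₁ ht₁
    have h3 : κ ∣ s₁ - t₁ := Nat.dvd_sub ha1 ha2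
    rwa [show s₁ - t₁ = d from by omega] at h3
  have hdeq : d = κ := Nat.dvd_antisymm hdκ hκd
  subst hdeq
  rcases Nat.eq_zero_or_pos t₁ with ht₁0 | ht₁pos
  · -- t₁ = 0, so d = s₁ ∈ A
    have hsA : d ∈ A := by
      rcases hs₁ with h0 | h
      · omega
      · rw [show d = s₁ from by omega]; exact h
    refine ⟨1, fun m hm hdm => ?_⟩
    obtain ⟨c, rfl⟩ := hdm
    rcases Nat.eq_zero_or_pos c with rfl | hc
    · simp at hm
    · have := mul_mem_semigroup hadd c d hsA hc
      rwa [mul_comm] at this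
  · -- t₁ > 0
    have ht₁A : t₁ ∈ A := by
      rcases ht₁ with h0 | h
      · omega
      · exact h
    have hs₁A : s₁ ∈ A := by
      rcases hs₁ with h0 | h
      · omega
      · exact h
    obtain ⟨τ, hτ⟩ := h1 t₁ ht₁A
    have hτpos : 0 < τ := by
      rcases Nat.eq_zero_or_pos τ with h0 | h0
      · subst h0; simp at hτ; omega
      · exact h0
    refine ⟨d * (τ * (τ + 1)) + 1, fun m hm hdm => ?_⟩
    set q := m / d with hqdef
    have hmq : m = d * q := by rw [hqdef, Nat.mul_div_cancel' hdm]
    have hqbig : τ * (τ + 1) + 1 ≤ q := by nlinarith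
    set r := q % τ with hrdef
    set qt := q / τ with hqtdef
    have hqeq : τ * qt + r = q := Nat.div_add_mod q τ
    have hrτ : r < τ := Nat.mod_lt q hτpos
    have hqtr : r + 1 ≤ qt := by nlinarith
    have hle : r ≤ qt := by omega
    have key : m = r * s₁ + (qt - r) * t₁ := by
      zify [hle]
      have hst' : (s₁ : ℤ) = t₁ + d := by exact_mod_cast hst
      have ht' : (t₁ : ℤ) = d * τ := by exact_mod_cast hτ
      have hq' : (m : ℤ) = d * q := by exact_mod_cast hmq
      have he : (q : ℤ) = τ * qt + r := by exact_mod_cast hqeq.symm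
      rw [hst', ht', hq', he]; ring
    rcases Nat.eq_zero_or_pos r with hr0 | hrpos'
    · rw [key, hr0]
      simp only [Nat.zero_mul, Nat.sub_zero, Nat.zero_add]
      exact mul_mem_semigroup hadd qt t₁ ht₁A (by omega)
    · rw [key]
      exact hadd _ (mul_mem_semigroup hadd r s₁ hs₁A hrpos') _
        (mul_mem_semigroup hadd (qt - r) t₁ ht₁A (by omega))

lemma cast_mod_of_dvd {K n : ℕ} (x : ℕ) (h : K ∣ n) : ((x % n : ℕ) : ZMod K) = (x : ZMod K) := by
  conv_rhs => rw [← Nat.mod_add_div x n]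
  push_cast
  rw [(ZMod.natCast_eq_zero_iff n K).mpr h]
  ring

lemma red_add {K n : ℕ} [NeZero n] (h : K ∣ n) (a b : ZMod n) :
    (((a + b).val : ℕ) : ZMod K) = ((a.val : ℕ) : ZMod K) + ((b.val : ℕ) : ZMod K) := by
  rw [ZMod.val_add, cast_mod_of_dvd _ h]
  push_cast
  ring

lemma red_sub {K n : ℕ} [NeZero n] (h : K ∣ n) (a b : ZMod n) :
    (((a - b).val : ℕ) : ZMod K) = ((a.val : ℕ) : ZMod K) - ((b.val : ℕ) : ZMod K) := by
  have h2 := red_add h (a - b) b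
  rw [sub_add_cancel] at h2
  linear_combination -h2

lemma red_natCast {K n : ℕ} [NeZero n] (h : K ∣ n) (x : ℕ) :
    (((x : ZMod n)).val : ZMod K) = (x : ZMod K) := by
  rw [ZMod.val_natCast, cast_mod_of_dvd _ h]

lemma red_one {K n : ℕ} [NeZero n] (h : K ∣ n) :
    (((1 : ZMod n)).val : ZMod K) = 1 := by
  have := red_natCast h 1
  push_cast at this
  exact this


end StmtAux

namespace Digraph'

variable {V : Type*}

lemma HasWalkIn.hasWalk {D : Digraph' V} {S : Set V} {m : ℕ} {x y : V}
    (h : D.HasWalkIn S m x y) : D.HasWalk m x y := by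
  obtain ⟨f, h0, hm, _, ha⟩ := h
  exact ⟨f, h0, hm, ha⟩

lemma hasWalk_zero (D : Digraph' V) (x : V) : D.HasWalk 0 x x :=
  ⟨fun _ => x, rfl, rfl, fun t ht => absurd ht (Nat.not_lt_zero t)⟩

lemma hasWalk_one {D : Digraph' V} {x y : V} (h : D.Adj x y) : D.HasWalk 1 x y := by
  refine ⟨fun t => if t = 0 then x else y, by simp, by simp, ?_⟩
  intro t ht
  interval_cases t
  simpa using h

lemma HasWalk.append {D : Digraph' V} {m n : ℕ} {x y z : V}
    (h1 : D.HasWalk m x y) (h2 : D.HasWalk n y z) : D.HasWalk (m + n) x z := by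
  obtain ⟨f, f0, fm, fa⟩ := h1
  obtain ⟨g, g0, gn, ga⟩ := h2
  refine ⟨fun t => if t < m then f t else g (t - m), ?_, ?_, ?_⟩
  · by_cases h : 0 < m
    · simp only [h, if_true, f0]
    · have hm : m = 0 := by omega
      simp only [h, if_false, Nat.zero_sub]
      rw [g0, ← fm, hm, f0]
  · have h : ¬ (m + n < m) := by omega
    simp only [h, if_false]
    rw [show m + n - m = n from by omega, gn]
  · intro t ht
    by_cases h : t + 1 < m
    · have h' : t < m := by omega
      simp only [h, h', if_true]
      exact fa t h'
    · by_cases h' : t < m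
      · have hm1 : t + 1 = m := by omega
        subst hm1
        simp only [h, h', if_true, if_false]
        rw [show t + 1 - (t + 1) = 0 from by omega, g0, ← fm]
        exact fa t h'
      · simp only [h, h', if_false]
        rw [show t + 1 - m = (t - m) + 1 from by omega]
        exact ga (t - m) (by omega)

lemma HasWalkIn.append {D : Digraph' V} {S : Set V} {m n : ℕ} {x y z : V}
    (h1 : D.HasWalkIn S m x y) (h2 : D.HasWalkIn S n y z) : D.HasWalkIn S (m + n) x z := by
  obtain ⟨f, f0, fm, fS, fa⟩ := h1
  obtain ⟨g, g0, gn, gS, ga⟩ := h2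
  refine ⟨fun t => if t < m then f t else g (t - m), ?_, ?_, ?_, ?_⟩
  · by_cases h : 0 < m
    · simp only [h, if_true, f0]
    · have hm : m = 0 := by omega
      simp only [h, if_false, Nat.zero_sub]
      rw [g0, ← fm, hm, f0]
  · have h : ¬ (m + n < m) := by omega
    simp only [h, if_false]
    rw [show m + n - m = n from by omega, gn]
  · intro t ht
    by_cases h : t < m
    · simp only [h, if_true]; exact fS t (by omega)
    · simp only [h, if_false]; exact gS (t - m) (by omega)
  · intro t ht
    by_cases h : t + 1 < m
    · have h' : t < m := by omega
      simp only [h, h', if_true]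
      exact fa t h'
    · by_cases h' : t < m
      · have hm1 : t + 1 = m := by omega
        subst hm1
        simp only [h, h', if_true, if_false]
        rw [show t + 1 - (t + 1) = 0 from by omega, g0, ← fm]
        exact fa t h'
      · simp only [h, h', if_false]
        rw [show t + 1 - m = (t - m) + 1 from by omega]
        exact ga (t - m) (by omega)

lemma hasWalkIn_of_adj {D : Digraph' V} {S : Set V} {x y : V}
    (hx : x ∈ S) (hy : y ∈ S) (h : D.Adj x y) : D.HasWalkIn S 1 x y := by
  refine ⟨fun t => if t = 0 then x else y, by simp, by simp, ?_, ?_⟩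
  · intro t ht
    by_cases h0 : t = 0 <;> simp [h0, hx, hy]
  · intro t ht
    interval_cases t
    simpa using h


lemma label_walkIn {D : Digraph' V} {S : Set V} {κ₀ : ℕ} {u₀ : V → ZMod κ₀}
    (hu : D.IsImprimLabelling S u₀) {m : ℕ} {x y : V} (h : D.HasWalkIn S m x y) :
    u₀ y = u₀ x + m := by
  obtain ⟨f, f0, fm, fS, fa⟩ := h
  have key : ∀ t, t ≤ m → u₀ (f t) = u₀ x + t := by
    intro t
    induction t with
    | zero => intro _; simp [f0]
    | succ k ih =>
      intro hk
      have h1 := hu (f k) (fS k (by omega)) (f (k+1)) (fS (k+1) hk) (fa k (by omega))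
      rw [h1, ih (by omega)]
      push_cast
      ring
  rw [← fm]
  exact key m le_rfl

lemma exists_ne_of_nontrivial {S : Set V} (hnt : ¬ IsTrivialComp S) {x : V} (hx : x ∈ S) :
    ∃ w ∈ S, w ≠ x := by
  by_contra h
  push_neg at h
  exact hnt ⟨x, Set.eq_singleton_iff_unique_mem.mpr ⟨hx, fun w hw => h w hw⟩⟩

lemma exists_out {D : Digraph' V} {η : ℕ} {Vset : ℕ → Set V} (hD : D.IsLinConn η Vset)
    {i : ℕ} (h1 : 1 ≤ i) (h2 : i ≤ η) (hnt : ¬ IsTrivialComp (Vset i))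
    {x : V} (hx : x ∈ Vset i) : ∃ y ∈ Vset i, D.Adj x y := by
  obtain ⟨w, hw, hwx⟩ := exists_ne_of_nontrivial hnt hx
  obtain ⟨m, f, f0, fm, fS, fa⟩ := hD.strong i h1 h2 x hx w hw
  rcases Nat.eq_zero_or_pos m with rfl | hm
  · exact absurd (fm.symm.trans f0) hwx
  · exact ⟨f 1, fS 1 hm, f0 ▸ fa 0 hm⟩

lemma walk_any_length {D : Digraph' V} {η : ℕ} {Vset : ℕ → Set V} (hD : D.IsLinConn η Vset)
    {i : ℕ} (h1 : 1 ≤ i) (h2 : i ≤ η) (hnt : ¬ IsTrivialComp (Vset i)) :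
    ∀ n : ℕ, ∀ x ∈ Vset i, ∃ y ∈ Vset i, D.HasWalkIn (Vset i) n x y := by
  intro n
  induction n with
  | zero =>
    intro x hx
    refine ⟨x, hx, fun _ => x, rfl, rfl, fun t _ => hx, fun t ht => absurd ht (Nat.not_lt_zero t)⟩
  | succ k ih =>
    intro x hx
    obtain ⟨y, hy, hw⟩ := ih x hx
    obtain ⟨z, hz, ha⟩ := exists_out hD h1 h2 hnt hy
    exact ⟨z, hz, hw.append (hasWalkIn_of_adj hy hz ha)⟩

lemma kappa_pos {D : Digraph' V} {η : ℕ} {Vset : ℕ → Set V} (hD : D.IsLinConn η Vset)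
    {i : ℕ} (h1 : 1 ≤ i) (h2 : i ≤ η) (hnt : ¬ IsTrivialComp (Vset i))
    {κi : ℕ} (hκ : D.IsImprimIndex (Vset i) κi) : 0 < κi := by
  obtain ⟨x, hx⟩ := hD.nonempty i h1 h2
  obtain ⟨w, hw, hwx⟩ := exists_ne_of_nontrivial hnt hx
  obtain ⟨m1, hw1⟩ := hD.strong i h1 h2 x hx w hw
  obtain ⟨m2, hw2⟩ := hD.strong i h1 h2 w hw x hx
  have hposm : 0 < m1 + m2 := by
    rcases Nat.eq_zero_or_pos (m1 + m2) with h0 | h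
    · exfalso
      obtain ⟨f, f0, fm, _, _⟩ := hw1
      have hm1 : m1 = 0 := by omega
      rw [hm1] at fm
      exact hwx (fm.symm.trans f0)
    · exact h
  have := hκ.1 x (m1 + m2) hx hposm (hw1.append hw2)
  rcases Nat.eq_zero_or_pos κi with rfl | h
  · simp at this; omega
  · exact h

lemma surj_label {D : Digraph' V} {η : ℕ} {Vset : ℕ → Set V} (hD : D.IsLinConn η Vset)
    {i : ℕ} (h1 : 1 ≤ i) (h2 : i ≤ η) (hnt : ¬ IsTrivialComp (Vset i))
    {κi : ℕ} {ui : V → ZMod κi} (hκpos : 0 < κi)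
    (hu : D.IsImprimLabelling (Vset i) ui) (c : ZMod κi) :
    ∃ z ∈ Vset i, ui z = c := by
  haveI : NeZero κi := ⟨by omega⟩
  obtain ⟨x, hx⟩ := hD.nonempty i h1 h2
  obtain ⟨z, hz, hwz⟩ := walk_any_length hD h1 h2 hnt ((c - ui x).val) x hx
  refine ⟨z, hz, ?_⟩
  rw [label_walkIn hu hwz]
  simp [ZMod.natCast_val, ZMod.cast_id]

lemma step2b_pair {D : Digraph' V} {η : ℕ} {Vset : ℕ → Set V} (hD : D.IsLinConn η Vset)
    {i : ℕ} (h1 : 1 ≤ i) (h2 : i ≤ η)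
    (hnt : ¬ IsTrivialComp (Vset i)) {κi : ℕ} {ui : V → ZMod κi}
    (hκ : D.IsImprimIndex (Vset i) κi) (hu : D.IsImprimLabelling (Vset i) ui)
    {x y : V} (hx : x ∈ Vset i) (hy : y ∈ Vset i) :
    ∃ M : ℕ, ∀ m : ℕ, M ≤ m → (m : ZMod κi) = ui y - ui x → D.HasWalkIn (Vset i) m x y := by
  classical
  set A : Set ℕ := {n | 0 < n ∧ D.HasWalkIn (Vset i) n x x} with hA
  have hadd : ∀ a ∈ A, ∀ b ∈ A, a + b ∈ A := by
    rintro a ⟨ha1, ha2⟩ b ⟨hb1, hb2⟩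
    exact ⟨by omega, ha2.append hb2⟩
  have hd1 : ∀ a ∈ A, κi ∣ a := fun a ha => hκ.1 x a hx ha.1 ha.2
  have hd2 : ∀ d : ℕ, (∀ a ∈ A, d ∣ a) → d ∣ κi := by
    intro d hd
    apply hκ.2
    intro y' m' hy' hm' hwy'
    obtain ⟨c1, hc1⟩ := hD.strong i h1 h2 x hx y' hy'
    obtain ⟨c2, hc2⟩ := hD.strong i h1 h2 y' hy' x hx
    rcases Nat.eq_zero_or_pos (c1 + c2) with h0 | hposc
    · have hc10 : c1 = 0 := by omega
      subst hc10
      obtain ⟨f, f0, fm, _, _⟩ := hc1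
      have hxy : x = y' := f0.symm.trans fm
      subst hxy
      exact hd m' ⟨hm', hwy'⟩
    · have hA1 : c1 + m' + c2 ∈ A := ⟨by omega, (hc1.append hwy').append hc2⟩
      have hA2 : c1 + c2 ∈ A := ⟨hposc, hc1.append hc2⟩
      have d1 := hd _ hA1
      have d2 := hd _ hA2
      have h3 : d ∣ (c1 + m' + c2) - (c1 + c2) := Nat.dvd_sub d1 d2
      rwa [show c1 + m' + c2 - (c1 + c2) = m' from by omega] at h3
  have hpos : ∃ a ∈ A, 0 < a := by
    obtain ⟨w, hw, hwx⟩ := exists_ne_of_nontrivial hnt hx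
    obtain ⟨m1, hw1⟩ := hD.strong i h1 h2 x hx w hw
    obtain ⟨m2, hw2⟩ := hD.strong i h1 h2 w hw x hx
    have hposm : 0 < m1 + m2 := by
      rcases Nat.eq_zero_or_pos (m1 + m2) with h0 | h
      · exfalso
        obtain ⟨f, f0, fm, _, _⟩ := hw1
        have hm1 : m1 = 0 := by omega
        rw [hm1] at fm
        exact hwx (fm.symm.trans f0)
      · exact h
    exact ⟨m1 + m2, ⟨hposm, hw1.append hw2⟩, hposm⟩
  obtain ⟨M0, hM0⟩ := num_semigroup A hadd κi hd1 hd2 hpos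
  obtain ⟨d0, hd0⟩ := hD.strong i h1 h2 x hx y hy
  refine ⟨M0 + d0, fun m hm hcast => ?_⟩
  have hlab : ui y = ui x + (d0 : ZMod κi) := label_walkIn hu hd0
  have hmd : (m : ZMod κi) = (d0 : ZMod κi) := by rw [hcast, hlab]; ring
  have hmod : m ≡ d0 [MOD κi] := (ZMod.natCast_eq_natCast_iff _ _ _).mp hmd
  have hdvd : κi ∣ m - d0 := (Nat.modEq_iff_dvd' (by omega)).mp hmod.symm
  rcases Nat.eq_zero_or_pos (m - d0) with h0 | hp
  · rwa [show m = d0 from by omega]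
  · have hmem : (m - d0) ∈ A := hM0 (m - d0) (by omega) hdvd
    have := hmem.2.append hd0
    rwa [show m - d0 + d0 = m from by omega] at this

lemma step2b_uniform {D : Digraph' V} [Fintype V] {η : ℕ} {Vset : ℕ → Set V}
    (hD : D.IsLinConn η Vset) {κ : ℕ → ℕ} {u : ∀ i : ℕ, V → ZMod (κ i)}
    (hnt : ∀ i, 1 ≤ i → i ≤ η → ¬ IsTrivialComp (Vset i))
    (hκ : ∀ i, 1 ≤ i → i ≤ η → D.IsImprimIndex (Vset i) (κ i))
    (hu : ∀ i, 1 ≤ i → i ≤ η → D.IsImprimLabelling (Vset i) (u i)) :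
    ∃ N, 1 ≤ N ∧ ∀ i, 1 ≤ i → i ≤ η → ∀ x ∈ Vset i, ∀ y ∈ Vset i, ∀ m : ℕ, N ≤ m →
      (m : ZMod (κ i)) = u i y - u i x → D.HasWalkIn (Vset i) m x y := by
  classical
  have key : ∀ t : Fin (η+1) × V × V, ∃ M : ℕ,
      ∀ m : ℕ, M ≤ m → ∀ (h1 : 1 ≤ (t.1 : ℕ)) (h2 : (t.1 : ℕ) ≤ η)
        (hx : t.2.1 ∈ Vset t.1) (hy : t.2.2 ∈ Vset t.1),
        ((m : ZMod (κ t.1)) = u t.1 t.2.2 - u t.1 t.2.1) →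
          D.HasWalkIn (Vset t.1) m t.2.1 t.2.2 := by
    intro t
    by_cases hc : 1 ≤ (t.1 : ℕ) ∧ (t.1 : ℕ) ≤ η ∧ t.2.1 ∈ Vset t.1 ∧ t.2.2 ∈ Vset t.1
    · obtain ⟨h1, h2, hx, hy⟩ := hc
      obtain ⟨M, hM⟩ := step2b_pair hD h1 h2 (hnt _ h1 h2) (hκ _ h1 h2) (hu _ h1 h2) hx hy
      exact ⟨M, fun m hm _ _ _ _ hc' => hM m hm hc'⟩
    · exact ⟨0, fun m _ h1 h2 hx hy _ => absurd ⟨h1, h2, hx, hy⟩ hc⟩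
  choose F hF using key
  refine ⟨Finset.univ.sup F + 1, by omega, ?_⟩
  intro i h1 h2 x hx y hy m hm hc
  have hle : F ⟨⟨i, by omega⟩, x, y⟩ ≤ Finset.univ.sup F := Finset.le_sup (Finset.mem_univ _)
  exact hF ⟨⟨i, by omega⟩, x, y⟩ m (by omega) h1 h2 hx hy hc

lemma walk_from_top {D : Digraph' V} {η : ℕ} {Vset : ℕ → Set V} (hD : D.IsLinConn η Vset)
    (hη : 1 ≤ η) {κη : ℕ} {uη : V → ZMod κη} (hu : D.IsImprimLabelling (Vset η) uη)
    {m : ℕ} {x y : V} (hx : x ∈ Vset η) (h : D.HasWalk m x y) :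
    y ∈ Vset η ∧ uη y = uη x + m := by
  obtain ⟨f, f0, fm, fa⟩ := h
  have key : ∀ t, t ≤ m → f t ∈ Vset η ∧ uη (f t) = uη x + t := by
    intro t
    induction t with
    | zero => intro _; exact ⟨f0 ▸ hx, by simp [f0]⟩
    | succ k ih =>
      intro hk
      obtain ⟨hfk, hlab⟩ := ih (by omega)
      have hadj := fa k (by omega)
      obtain ⟨i, hi1, hcase⟩ := hD.arcs _ _ hadj
      rcases hcase with ⟨hiη, hfi, hgi⟩ | ⟨hiη, hfi, hgi⟩
      · have hieq : i = η := hD.disjoint' i η hi1 hiη hη le_rfl _ hfi hfk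
        subst hieq
        refine ⟨hgi, ?_⟩
        rw [hu _ hfk _ hgi hadj, hlab]
        push_cast; ring
      · exfalso
        have hieq : i = η := hD.disjoint' i η hi1 (by omega) hη le_rfl _ hfi hfk
        omega
  obtain ⟨hh1, hh2⟩ := key m le_rfl
  exact ⟨fm ▸ hh1, fm ▸ hh2⟩


lemma val_cast_self {n : ℕ} [NeZero n] (a : ZMod n) : ((a.val : ℕ) : ZMod n) = a :=
  ZMod.natCast_rightInverse a

/-- Key construction lemma: from any vertex `b` of `Vset p` there is, for every large
`m`, a walk of length `m` to every vertex `w` of the top component whose label is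
`c b + m`, where the "prey class" function `c` moreover has a controlled dependence
on `b`. -/
lemma lemD {D : Digraph' V} [Fintype V] {η : ℕ} {Vset : ℕ → Set V}
    (hD : D.IsLinConn η Vset) {κ : ℕ → ℕ} {u : ∀ i : ℕ, V → ZMod (κ i)}
    (hnt : ∀ i, 1 ≤ i → i ≤ η → ¬ IsTrivialComp (Vset i))
    (hκ : ∀ i, 1 ≤ i → i ≤ η → D.IsImprimIndex (Vset i) (κ i))
    (hu : ∀ i, 1 ≤ i → i ≤ η → D.IsImprimLabelling (Vset i) (u i))
    {N : ℕ} (hN1 : 1 ≤ N)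
    (hN : ∀ i, 1 ≤ i → i ≤ η → ∀ x ∈ Vset i, ∀ y ∈ Vset i, ∀ m : ℕ, N ≤ m →
      (m : ZMod (κ i)) = u i y - u i x → D.HasWalkIn (Vset i) m x y) :
    ∀ k p : ℕ, p = η - k → 1 ≤ p → ∃ (c : V → ZMod (κ η)) (M : ℕ),
      (∀ b ∈ Vset p, ∀ m : ℕ, M ≤ m → ∀ w ∈ Vset η,
          u η w = c b + (m : ZMod (κ η)) → D.HasWalk m b w) ∧
      (∃ a ∈ Vset p, ∀ b ∈ Vset p, ∀ b' ∈ Vset p,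
          c b - c b' = ((u p a - u p b').val : ZMod (κ η)) -
            ((u p a - u p b).val : ZMod (κ η))) := by
  intro k
  induction k with
  | zero =>
    intro p hp h1
    have hpη : p = η := by omega
    subst hpη
    haveI : NeZero (κ p) := ⟨by have := kappa_pos hD h1 le_rfl (hnt p h1 le_rfl) (hκ p h1 le_rfl); omega⟩
    refine ⟨u p, N, ?_, ?_⟩
    · intro b hb m hm w hw hlab
      have : (m : ZMod (κ p)) = u p w - u p b := by rw [hlab]; ring
      exact (hN p h1 le_rfl b hb w hw m hm this).hasWalk
    · obtain ⟨a, ha⟩ := hD.nonempty p h1 le_rfl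
      refine ⟨a, ha, fun b hb b' hb' => ?_⟩
      rw [val_cast_self, val_cast_self]
      ring
  | succ k ih =>
    intro p hp h1
    have hkη : k + 1 ≤ η := by omega
    have hp1 : p + 1 = η - k := by omega
    obtain ⟨c', M', hwalk', hprop'⟩ := ih (p + 1) hp1 (by omega)
    have hpη : p + 1 ≤ η := by omega
    haveI : NeZero (κ p) := ⟨by have := kappa_pos hD h1 (by omega) (hnt p h1 (by omega)) (hκ p h1 (by omega)); omega⟩
    obtain ⟨a₀, ha₀, b₀, hb₀, hab₀⟩ := hD.linked p h1 hpη
    set mseg : V → ℕ := fun b => (u p a₀ - u p b).val + κ p * N with hmseg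
    refine ⟨fun b => c' b₀ - ((mseg b : ℕ) : ZMod (κ η)) - 1, M' + κ p * N + κ p + 1,
      ?_, ?_⟩
    · intro b hb m hm w hw hlab
      have hsegN : N ≤ mseg b := by
        have : 1 ≤ κ p := Nat.pos_of_ne_zero (NeZero.ne (κ p))
        have : N ≤ κ p * N := Nat.le_mul_of_pos_left N (by omega)
        simp only [hmseg]; omega
      have hsegle : mseg b + 1 + M' ≤ m := by
        have hv : (u p a₀ - u p b).val < κ p := ZMod.val_lt _
        simp only [hmseg] at *; omega
      -- walk 1 : from b to a₀ within Vset p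
      have hw1 : D.HasWalkIn (Vset p) (mseg b) b a₀ := by
        apply hN p h1 (by omega) b hb a₀ ha₀ (mseg b) hsegN
        simp only [hmseg]
        push_cast
        rw [val_cast_self]
        simp [ZMod.natCast_self]
      -- walk 2 : the arc
      have hw2 : D.HasWalk 1 a₀ b₀ := hasWalk_one hab₀
      -- walk 3 : from b₀ to w
      set m2 := m - mseg b - 1 with hm2
      have hm2eq : mseg b + 1 + m2 = m := by omega
      have hw3 : D.HasWalk m2 b₀ w := by
        apply hwalk' b₀ hb₀ m2 (by omega) w hw
        have hcm2 : (m2 : ZMod (κ η)) = (m : ZMod (κ η)) - (mseg b : ℕ) - 1 := by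
          have : ((mseg b + 1 + m2 : ℕ) : ZMod (κ η)) = (m : ZMod (κ η)) := by rw [hm2eq]
          push_cast at this
          linear_combination this
        rw [hlab, hcm2]
        ring
      have := (hw1.hasWalk.append hw2).append hw3
      rwa [hm2eq] at this
    · refine ⟨a₀, ha₀, fun b hb b' hb' => ?_⟩
      simp only [hmseg]
      push_cast
      ring


end Digraph'


open Digraph' in
/-- the limit of `{C(D^m)}` is a disjoint union of complete graphs iff
`κ_η` divides every `κ_p` and the differences `red(i) − red(j)` over `I(D_{p,p+1})`
are constant mod `κ_η`. -/
theorem stmt11 {V : Type*} [Fintype V] (D : Digraph' V) (η : ℕ) (Vset : ℕ → Set V)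
    (hD : D.IsLinConn η Vset) (hη : 2 ≤ η)
    (hnt : ∀ i, 1 ≤ i → i ≤ η → ¬ IsTrivialComp (Vset i))
    (κ : ℕ → ℕ) (u : ∀ i : ℕ, V → ZMod (κ i))
    (hκ : ∀ i, 1 ≤ i → i ≤ η → IsImprimIndex D (Vset i) (κ i))
    (hu : ∀ i, 1 ≤ i → i ≤ η → IsImprimLabelling D (Vset i) (u i))
    (G : SimpleGraph V) (hG : D.CompConvergesTo G) :
    (∀ x y : V, x ≠ y → G.Reachable x y → G.Adj x y) ↔
    (∀ p, 1 ≤ p → p + 1 ≤ η → κ η ∣ κ p ∧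
      ∀ (i : ZMod (κ p)) (j : ZMod (κ (p + 1))) (i' : ZMod (κ p)) (j' : ZMod (κ (p + 1))),
        InI D Vset u p i j → InI D Vset u p i' j' →
        (i.val : ZMod (κ η)) - (j.val : ZMod (κ η)) =
          (i'.val : ZMod (κ η)) - (j'.val : ZMod (κ η))) := by
  classical
  obtain ⟨Nc, hNc1, hNceq⟩ := hG
  obtain ⟨N, hN1, hN⟩ := step2b_uniform hD hnt hκ hu
  have hη1 : 1 ≤ η := by omega
  have hκpos : ∀ i, 1 ≤ i → i ≤ η → 0 < κ i := fun i h1 h2 =>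
    kappa_pos hD h1 h2 (hnt i h1 h2) (hκ i h1 h2)
  have hκη : 0 < κ η := hκpos η hη1 le_rfl
  haveI : NeZero (κ η) := ⟨by omega⟩
  have huη := hu η hη1 le_rfl
  have hGadj : ∀ m : ℕ, Nc ≤ m → ∀ x y : V,
      (x ≠ y ∧ ∃ z, D.HasWalk m x z ∧ D.HasWalk m y z) → G.Adj x y := by
    intro m hm x y h
    rw [← hNceq m hm]
    exact h
  have hGadj' : ∀ x y : V, G.Adj x y →
      x ≠ y ∧ ∃ z, D.HasWalk Nc x z ∧ D.HasWalk Nc y z := by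
    intro x y h
    rw [← hNceq Nc le_rfl] at h
    exact h
  have hTopAdj : ∀ z z' : V, z ∈ Vset η → z' ∈ Vset η → G.Adj z z' → u η z = u η z' := by
    intro z z' hz hz' h
    obtain ⟨hne, w, hw1, hw2⟩ := hGadj' z z' h
    have e1 := (walk_from_top hD hη1 huη hz hw1).2
    have e2 := (walk_from_top hD hη1 huη hz' hw2).2
    rw [e1] at e2
    exact add_right_cancel e2
  have hsurj : ∀ c : ZMod (κ η), ∃ z ∈ Vset η, u η z = c :=
    surj_label hD hη1 le_rfl (hnt η hη1 le_rfl) hκη huη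
  have hAdjC : ∀ p, 1 ≤ p → p + 1 ≤ η → ∀ x ∈ Vset p, ∀ (Mw : ℕ) (cz : ZMod (κ η)),
      (∀ m : ℕ, Mw ≤ m → ∀ w ∈ Vset η, u η w = cz + (m : ZMod (κ η)) → D.HasWalk m x w) →
      ∀ z ∈ Vset η, u η z = cz → G.Adj x z := by
    intro p h1 h2 x hx Mw cz hprey z hz hzc
    set m0 := Nc + Mw + N with hm0
    obtain ⟨w, hw, hwc⟩ := hsurj (cz + (m0 : ZMod (κ η)))
    apply hGadj m0 (by omega) x z
    refine ⟨?_, w, hprey m0 (by omega) w hw hwc, ?_⟩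
    · intro he
      rw [he] at hx
      have := hD.disjoint' p η h1 (by omega) hη1 le_rfl z hx hz
      omega
    · refine (hN η hη1 le_rfl z hz w hw m0 (by omega) ?_).hasWalk
      rw [hwc, hzc]
      ring
  constructor
  · -- forward direction
    intro hclique
    have hdvd : ∀ q, 1 ≤ q → q + 1 ≤ η → κ η ∣ κ q := by
      intro q h1 h2
      haveI : NeZero (κ q) := ⟨by have := hκpos q h1 (by omega); omega⟩
      obtain ⟨c', M', hwalk', -⟩ :=
        lemD hD hnt hκ hu hN1 hN (η - (q+1)) (q+1) (by omega) (by omega)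
      obtain ⟨a₀, ha₀, b₀, hb₀, hab₀⟩ := hD.linked q h1 h2
      have hq1 : 1 ≤ κ q := by have := hκpos q h1 (by omega); omega
      have hwalkx : ∀ s : ℕ, ∀ m : ℕ, M' + κ q * (N + s) + 1 + N ≤ m → ∀ w ∈ Vset η,
          u η w = (c' b₀ - ((κ q * (N + s) : ℕ) : ZMod (κ η)) - 1) + (m : ZMod (κ η)) →
          D.HasWalk m a₀ w := by
        intro s m hm w hw hlab
        have hsN : N ≤ κ q * (N + s) := le_trans (by omega) (Nat.le_mul_of_pos_left _ (by omega))
        have hw1 : D.HasWalkIn (Vset q) (κ q * (N + s)) a₀ a₀ := by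
          apply hN q h1 (by omega) a₀ ha₀ a₀ ha₀ _ hsN
          push_cast
          rw [ZMod.natCast_self]
          ring
        set m2 := m - κ q * (N + s) - 1 with hm2def
        have hm2eq : κ q * (N + s) + 1 + m2 = m := by omega
        have hw3 : D.HasWalk m2 b₀ w := by
          apply hwalk' b₀ hb₀ m2 (by omega) w hw
          have hc : ((κ q * (N + s) + 1 + m2 : ℕ) : ZMod (κ η)) = (m : ZMod (κ η)) := by
            rw [hm2eq]
          push_cast at hc
          rw [hlab]
          push_cast
          linear_combination -hc
        have hfin := (hw1.hasWalk.append (hasWalk_one hab₀)).append hw3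
        rwa [hm2eq] at hfin
      obtain ⟨z0, hz0, hz0c⟩ := hsurj (c' b₀ - ((κ q * (N + 0) : ℕ) : ZMod (κ η)) - 1)
      obtain ⟨z1, hz1, hz1c⟩ := hsurj (c' b₀ - ((κ q * (N + 1) : ℕ) : ZMod (κ η)) - 1)
      have hA0 : G.Adj a₀ z0 :=
        hAdjC q h1 h2 a₀ ha₀ _ _ (hwalkx 0) z0 hz0 hz0c
      have hA1 : G.Adj a₀ z1 :=
        hAdjC q h1 h2 a₀ ha₀ _ _ (hwalkx 1) z1 hz1 hz1c
      have hlabeq : u η z0 = u η z1 := by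
        by_cases hzz : z0 = z1
        · rw [hzz]
        · exact hTopAdj z0 z1 hz0 hz1
            (hclique z0 z1 hzz (hA0.symm.reachable.trans hA1.reachable))
      rw [hz0c, hz1c] at hlabeq
      have hzero : ((κ q : ℕ) : ZMod (κ η)) = 0 := by
        push_cast at hlabeq
        linear_combination hlabeq
      exact (ZMod.natCast_eq_zero_iff _ _).mp hzero
    intro p hp1 hp2
    refine ⟨hdvd p hp1 hp2, ?_⟩
    have hdp : κ η ∣ κ p := hdvd p hp1 hp2
    have hdvd1 : κ η ∣ κ (p+1) := by
      rcases Nat.lt_or_ge (p+1) η with h | h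
      · exact hdvd (p+1) (by omega) (by omega)
      · have he : p + 1 = η := by omega
        rw [he]
    intro i j i' j' hij hij'
    obtain ⟨x₁, hx₁, y₁, hy₁, hadj₁, hux₁, huy₁⟩ := hij
    obtain ⟨x₂, hx₂, y₂, hy₂, hadj₂, hux₂, huy₂⟩ := hij'
    haveI : NeZero (κ p) := ⟨by have := hκpos p hp1 (by omega); omega⟩
    haveI : NeZero (κ (p+1)) := ⟨by have := hκpos (p+1) (by omega) (by omega); omega⟩
    obtain ⟨c', M', hwalk', a', ha', hprop'⟩ :=
      lemD hD hnt hκ hu hN1 hN (η - (p+1)) (p+1) (by omega) (by omega)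
    have hwalkgen : ∀ x₀ ∈ Vset p, ∀ y₀ ∈ Vset (p+1), D.Adj x₀ y₀ →
        ∀ m : ℕ, (M' + ((u p x₀ - u p x₁).val + κ p * N) + 1 + N) ≤ m → ∀ w ∈ Vset η,
        u η w = (c' y₀ - (((u p x₀ - u p x₁).val + κ p * N : ℕ) : ZMod (κ η)) - 1)
          + (m : ZMod (κ η)) → D.HasWalk m x₁ w := by
      intro x₀ hx₀ y₀ hy₀ hadj m hm w hw hlab
      set s := (u p x₀ - u p x₁).val + κ p * N with hsdef
      have hsN : N ≤ s := by
        have hh : N ≤ κ p * N := Nat.le_mul_of_pos_left _ (by have := hκpos p hp1 (by omega); omega)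
        omega
      have hw1 : D.HasWalkIn (Vset p) s x₁ x₀ := by
        apply hN p hp1 (by omega) x₁ hx₁ x₀ hx₀ s hsN
        simp only [hsdef]
        push_cast
        rw [val_cast_self, ZMod.natCast_self]
        ring
      set m2 := m - s - 1 with hm2def
      have hm2eq : s + 1 + m2 = m := by omega
      have hw3 : D.HasWalk m2 y₀ w := by
        apply hwalk' y₀ hy₀ m2 (by omega) w hw
        have hc : ((s + 1 + m2 : ℕ) : ZMod (κ η)) = (m : ZMod (κ η)) := by rw [hm2eq]
        push_cast at hc
        rw [hlab]
        push_cast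
        linear_combination -hc
      have hfin := (hw1.hasWalk.append (hasWalk_one hadj)).append hw3
      rwa [hm2eq] at hfin
    obtain ⟨z1, hz1, hz1c⟩ :=
      hsurj (c' y₁ - (((u p x₁ - u p x₁).val + κ p * N : ℕ) : ZMod (κ η)) - 1)
    obtain ⟨z2, hz2, hz2c⟩ :=
      hsurj (c' y₂ - (((u p x₂ - u p x₁).val + κ p * N : ℕ) : ZMod (κ η)) - 1)
    have hA1 : G.Adj x₁ z1 :=
      hAdjC p hp1 hp2 x₁ hx₁ _ _ (hwalkgen x₁ hx₁ y₁ hy₁ hadj₁) z1 hz1 hz1c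
    have hA2 : G.Adj x₁ z2 :=
      hAdjC p hp1 hp2 x₁ hx₁ _ _ (hwalkgen x₂ hx₂ y₂ hy₂ hadj₂) z2 hz2 hz2c
    have hlabeq : u η z1 = u η z2 := by
      by_cases hzz : z1 = z2
      · rw [hzz]
      · exact hTopAdj z1 z2 hz1 hz2
          (hclique z1 z2 hzz (hA1.symm.reachable.trans hA2.reachable))
    rw [hz1c, hz2c] at hlabeq
    have hpr := hprop' y₁ hy₁ y₂ hy₂
    have e0 : ((κ p : ℕ) : ZMod (κ η)) = 0 := (ZMod.natCast_eq_zero_iff _ _).mpr hdp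
    rw [hux₁, hux₂] at hlabeq
    rw [huy₁, huy₂] at hpr
    push_cast at hlabeq
    have eA0 := red_sub (K := κ η) hdp i i
    have eA := red_sub (K := κ η) hdp i' i
    have eB := red_sub (K := κ η) hdvd1 (u (p+1) a') j
    have eC := red_sub (K := κ η) hdvd1 (u (p+1) a') j'
    linear_combination -hlabeq + hpr - eA0 + eA - eB + eC
  · -- backward direction
    intro hyp
    have hdvdA : ∀ i, 1 ≤ i → i ≤ η → κ η ∣ κ i := by
      intro i h1 h2
      rcases Nat.lt_or_ge i η with h | h
      · exact (hyp i h1 (by omega)).1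
      · have he : i = η := by omega
        rw [he]
    choose P hP1 hP2 hPmem using hD.cover
    have hPuniq : ∀ (v : V) (i : ℕ), 1 ≤ i → i ≤ η → v ∈ Vset i → P v = i := fun v i h1 h2 hv =>
      hD.disjoint' (P v) i (hP1 v) (hP2 v) h1 h2 v (hPmem v) hv
    have hδex : ∀ i : ℕ, 1 ≤ i → i + 1 ≤ η → ∃ d : ZMod (κ η),
        ∀ x ∈ Vset i, ∀ y ∈ Vset (i+1), D.Adj x y →
          ((u i x).val : ZMod (κ η)) - ((u (i+1) y).val : ZMod (κ η)) = d := by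
      intro i h1 h2
      obtain ⟨a, ha, b, hb, hab⟩ := hD.linked i h1 h2
      refine ⟨((u i a).val : ZMod (κ η)) - ((u (i+1) b).val : ZMod (κ η)), ?_⟩
      intro x hx y hy hadj
      exact (hyp i h1 h2).2 (u i x) (u (i+1) y) (u i a) (u (i+1) b)
        ⟨x, hx, y, hy, hadj, rfl, rfl⟩ ⟨a, ha, b, hb, hab, rfl, rfl⟩
    set δ : ℕ → ZMod (κ η) :=
      fun i => if h : 1 ≤ i ∧ i + 1 ≤ η then (hδex i h.1 h.2).choose else 0 with hδ
    set U : ℕ → V → ZMod (κ η) := fun i v => ((u i v).val : ZMod (κ η)) with hU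
    have hδspec : ∀ i : ℕ, 1 ≤ i → i + 1 ≤ η → ∀ x ∈ Vset i, ∀ y ∈ Vset (i+1),
        D.Adj x y → U i x - U (i+1) y = δ i := by
      intro i h1 h2 x hx y hy hadj
      have hc : 1 ≤ i ∧ i + 1 ≤ η := ⟨h1, h2⟩
      simp only [hδ, dif_pos hc, hU]
      exact (hδex i h1 h2).choose_spec x hx y hy hadj
    set ψ : V → ZMod (κ η) := fun v =>
      U (P v) v - ∑ jj ∈ Finset.Ico (P v) η, (δ jj + 1) with hψ
    have hψstep : ∀ v w : V, D.Adj v w → ψ w = ψ v + 1 := by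
      intro v w hadj
      obtain ⟨i, hi1, hcase⟩ := hD.arcs v w hadj
      rcases hcase with ⟨hiη, hvi, hwi⟩ | ⟨hiη, hvi, hwi⟩
      · have hpv : P v = i := hPuniq v i hi1 hiη hvi
        have hpw : P w = i := hPuniq w i hi1 hiη hwi
        haveI : NeZero (κ i) := ⟨by have := hκpos i hi1 hiη; omega⟩
        have hlab : u i w = u i v + 1 := hu i hi1 hiη v hvi w hwi hadj
        have hUlab : U i w = U i v + 1 := by
          simp only [hU]
          rw [hlab, red_add (hdvdA i hi1 hiη), red_one (hdvdA i hi1 hiη)]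
        simp only [hψ]
        rw [hpv, hpw, hUlab]
        ring
      · have hpv : P v = i := hPuniq v i hi1 (by omega) hvi
        have hpw : P w = i + 1 := hPuniq w (i+1) (by omega) hiη hwi
        have hδi := hδspec i hi1 hiη v hvi w hwi hadj
        simp only [hψ]
        rw [hpv, hpw]
        rw [Finset.sum_eq_sum_Ico_succ_bot (by omega : i < η) (fun jj => δ jj + 1)]
        linear_combination -hδi
    have hψwalk : ∀ (m : ℕ) (x y : V), D.HasWalk m x y → ψ y = ψ x + (m : ZMod (κ η)) := by
      intro m x y hwalk
      obtain ⟨f, f0, fm, fa⟩ := hwalk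
      have key : ∀ t, t ≤ m → ψ (f t) = ψ x + (t : ZMod (κ η)) := by
        intro t
        induction t with
        | zero => intro _; simp [f0]
        | succ k ih =>
          intro hk
          rw [hψstep (f k) (f (k+1)) (fa k (by omega)), ih (by omega)]
          push_cast
          ring
      rw [← fm]
      exact key m le_rfl
    have hψtop : ∀ z ∈ Vset η, ψ z = u η z := by
      intro z hz
      have hpz : P z = η := hPuniq z η hη1 le_rfl hz
      simp only [hψ]
      rw [hpz, Finset.Ico_self, Finset.sum_empty, sub_zero]
      simp only [hU]
      exact val_cast_self _
    have hψedge : ∀ x y : V, G.Adj x y → ψ x = ψ y := by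
      intro x y h
      obtain ⟨hne, w, hw1, hw2⟩ := hGadj' x y h
      have e1 := hψwalk Nc x w hw1
      have e2 := hψwalk Nc y w hw2
      rw [e1] at e2
      exact add_right_cancel e2
    have hψreach : ∀ x y : V, G.Reachable x y → ψ x = ψ y := by
      intro x y h
      obtain ⟨pw⟩ := h
      induction pw with
      | nil => rfl
      | cons h p ih => exact (hψedge _ _ h).trans ih
    intro x y hne hreach
    have hψeq : ψ x = ψ y := hψreach x y hreach
    obtain ⟨cX, MX, hwalkX, -⟩ := lemD hD hnt hκ hu hN1 hN (η - P x) (P x)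
      (by have := hP2 x; have := hP1 x; omega) (hP1 x)
    obtain ⟨cY, MY, hwalkY, -⟩ := lemD hD hnt hκ hu hN1 hN (η - P y) (P y)
      (by have := hP2 y; have := hP1 y; omega) (hP1 y)
    have hcX : cX x = ψ x := by
      obtain ⟨w, hw, hwc⟩ := hsurj (cX x + (MX : ZMod (κ η)))
      have hwk := hwalkX x (hPmem x) MX le_rfl w hw hwc
      have h3 := hψwalk MX x w hwk
      rw [hψtop w hw] at h3
      rw [hwc] at h3
      exact add_right_cancel h3
    have hcY : cY y = ψ y := by
      obtain ⟨w, hw, hwc⟩ := hsurj (cY y + (MY : ZMod (κ η)))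
      have hwk := hwalkY y (hPmem y) MY le_rfl w hw hwc
      have h3 := hψwalk MY y w hwk
      rw [hψtop w hw] at h3
      rw [hwc] at h3
      exact add_right_cancel h3
    set m0 := Nc + MX + MY with hm0
    obtain ⟨w, hw, hwc⟩ := hsurj (ψ x + (m0 : ZMod (κ η)))
    apply hGadj m0 (by omega) x y
    refine ⟨hne, w, ?_, ?_⟩
    · exact hwalkX x (hPmem x) m0 (by omega) w hw (by rw [hwc, hcX])
    · exact hwalkY y (hPmem y) m0 (by omega) w hw (by rw [hwc, hcY, ← hψeq])
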